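/- For real γ > -1, real k > 0, and a positive integer μ, the integral ∫₀^∞ s^γ ln^μ(s) e^{-ks} ds equals (1/k^{γ+1}) · Σ_{ℓ=0}^{μ} C(μ,ℓ) Γ^{(μ-ℓ)}(γ+1) (-1)^ℓ ln^ℓ(k), where Γ^{(j)} denotes the j-th derivative of the Gamma function. -/

import Mathlib

open MeasureTheory Real Set Filter Asymptotics
open scoped Topology

noncomputable def fC (n : ℕ) : ℝ → ℂ := fun t => ((Real.log t) ^ n * Real.exp (-t) : ℝ)

lemma fC_loc (n : ℕ) : LocallyIntegrableOn (fC n) (Ioi 0) := by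
  apply ContinuousOn.locallyIntegrableOn _ measurableSet_Ioi
  apply Continuous.comp_continuousOn Complex.continuous_ofReal
  apply ContinuousOn.mul _ (Continuous.continuousOn (by continuity))
  exact ((Real.continuousOn_log.mono (by simp [subset_compl_singleton_iff])).pow n)

lemma fC_top (n : ℕ) (a : ℝ) : (fC n) =O[atTop] (· ^ (-a)) := by
  induction n generalizing a with
  | zero =>
    have : (fun t : ℝ => (Real.exp (-t) : ℂ)) =O[atTop] (· ^ (-a)) := by
      rw [← isBigO_norm_left]
      simp_rw [Complex.norm_real, isBigO_norm_left]
      simpa only [neg_one_mul] using (isLittleO_exp_neg_mul_rpow_atTop zero_lt_one _).isBigO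
    exact this.congr_left fun t => by simp only [fC, pow_zero, one_mul]
  | succ n ih =>
    have := isBigO_rpow_top_log_smul (lt_add_one a) (ih (a + 1))
    refine this.congr_left fun t => ?_
    simp only [fC]
    push_cast
    rw [Complex.real_smul]
    push_cast
    ring

lemma fC_bot (n : ℕ) {b : ℝ} (hb : 0 < b) : (fC n) =O[𝓝[>] (0:ℝ)] (· ^ (-b)) := by
  induction n generalizing b with
  | zero =>
    rw [isBigO_iff]
    refine ⟨1, ?_⟩
    filter_upwards [Ioo_mem_nhdsGT_of_mem (by norm_num : (0:ℝ) ∈ Ico 0 1)] with t ht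
    simp only [fC, pow_zero, one_mul, Complex.norm_real, Real.norm_eq_abs]
    rw [abs_of_pos (Real.rpow_pos_of_pos ht.1 _), abs_of_pos (Real.exp_pos _)]
    calc Real.exp (-t) ≤ 1 := Real.exp_le_one_iff.mpr (by linarith [ht.1])
      _ = t ^ (0:ℝ) := by rw [Real.rpow_zero]
      _ ≤ t ^ (-b) := Real.rpow_le_rpow_of_exponent_ge ht.1 ht.2.le (by linarith)
  | succ n ih =>
    have := isBigO_rpow_zero_log_smul (half_lt_self hb) (ih (half_pos hb))
    refine this.congr_left fun t => ?_
    simp only [fC]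
    push_cast
    rw [Complex.real_smul]
    push_cast
    ring
noncomputable def g (n : ℕ) (x : ℝ) : ℝ :=
  ∫ t in Ioi (0:ℝ), t ^ (x - 1) * ((Real.log t) ^ n * Real.exp (-t))

lemma mellin_fC (n : ℕ) (x : ℝ) : mellin (fC n) (x : ℂ) = ((g n x : ℝ) : ℂ) := by
  have step : mellin (fC n) (x : ℂ)
      = ∫ t in Ioi (0:ℝ), ((t ^ (x - 1) * ((Real.log t) ^ n * Real.exp (-t)) : ℝ) : ℂ) := by
    rw [mellin]
    refine setIntegral_congr_fun measurableSet_Ioi fun t ht => ?_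
    rw [smul_eq_mul, fC]
    rw [show ((x:ℂ) - 1) = ((x - 1 : ℝ) : ℂ) by push_cast; ring,
      ← Complex.ofReal_cpow (le_of_lt ht)]
    push_cast
    ring
  rw [step, g]
  exact integral_ofReal

lemma fC_smul (n : ℕ) : (fun t : ℝ => Real.log t • fC n t) = fC (n + 1) := by
  funext t
  simp only [fC]
  push_cast
  rw [Complex.real_smul]
  push_cast
  ring

lemma g_hasDeriv (n : ℕ) {x : ℝ} (hx : 0 < x) : HasDerivAt (g n) (g (n + 1) x) x := by
  have H := (mellin_hasDerivAt_of_isBigO_rpow (a := x + 1) (b := x / 2) (s := (x : ℂ))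
    (fC_loc n) (fC_top n (x + 1)) (by simp only [Complex.ofReal_re]; linarith) (fC_bot n (half_pos hx))
    (by simp only [Complex.ofReal_re]; linarith)).2
  rw [fC_smul, mellin_fC] at H
  have H2 := H.real_of_complex
  have hfun : (fun y : ℝ => (mellin (fC n) (y : ℂ)).re) = g n := by
    funext y; rw [mellin_fC, Complex.ofReal_re]
  rwa [hfun, Complex.ofReal_re] at H2

lemma g_integrable (n : ℕ) {x : ℝ} (hx : 0 < x) :
    IntegrableOn (fun t : ℝ => t ^ (x - 1) * ((Real.log t) ^ n * Real.exp (-t))) (Ioi 0) := by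
  have H : MellinConvergent (fC n) (x : ℂ) :=
    mellinConvergent_of_isBigO_rpow (a := x + 1) (b := x / 2)
      (fC_loc n) (fC_top n (x + 1)) (by simp only [Complex.ofReal_re]; linarith) (fC_bot n (half_pos hx))
      (by simp only [Complex.ofReal_re]; linarith)
  have H2 : IntegrableOn (fun t : ℝ => ((t:ℂ) ^ ((x:ℂ) - 1) • fC n t).re) (Ioi 0) := H.re
  refine H2.congr_fun (fun t ht => ?_) measurableSet_Ioi
  dsimp only
  rw [smul_eq_mul, fC,
    show ((x:ℂ) - 1) = ((x - 1 : ℝ) : ℂ) by push_cast; ring,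
    ← Complex.ofReal_cpow (le_of_lt ht), ← Complex.ofReal_mul, Complex.ofReal_re]

lemma gamma_eq (n : ℕ) {x : ℝ} (hx : 0 < x) : iteratedDeriv n Real.Gamma x = g n x := by
  induction n generalizing x with
  | zero =>
    rw [iteratedDeriv_zero, Real.Gamma_eq_integral hx, g]
    refine setIntegral_congr_fun measurableSet_Ioi fun t ht => ?_
    simp; ring
  | succ n ih =>
    rw [iteratedDeriv_succ]
    have hev : iteratedDeriv n Real.Gamma =ᶠ[𝓝 x] g n := by
      filter_upwards [Ioi_mem_nhds hx] with y hy using ih hy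
    rw [hev.deriv_eq, (g_hasDeriv n hx).deriv]

/-- For real `γ > -1`, `k > 0` and a positive integer `μ`,
`∫₀^∞ s^γ (ln s)^μ e^{-ks} ds
  = (1/k^(γ+1)) ∑_{ℓ=0}^{μ} C(μ,ℓ) Γ^{(μ-ℓ)}(γ+1) (-1)^ℓ (ln k)^ℓ`. -/
theorem integral_rpow_log_pow_exp (γ k : ℝ) (μ : ℕ) (hγ : γ > -1) (hk : k > 0)
    (hμ : 1 ≤ μ) :
    ∫ s in Set.Ioi (0 : ℝ), s ^ γ * (Real.log s) ^ μ * Real.exp (-k * s) =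
      (1 / k ^ (γ + 1)) *
        ∑ ℓ ∈ Finset.range (μ + 1),
          (μ.choose ℓ : ℝ) * iteratedDeriv (μ - ℓ) Real.Gamma (γ + 1) *
            (-1) ^ ℓ * (Real.log k) ^ ℓ := by
  have hγ1 : (0:ℝ) < γ + 1 := by linarith
  have hk' : k ≠ 0 := ne_of_gt hk
  set c : ℕ → ℝ := fun m =>
    (-1 : ℝ) ^ (m + μ) * Real.log k ^ (μ - m) * (μ.choose m : ℝ) * k ^ (-γ) with hc
  have hint : ∀ m : ℕ,
      IntegrableOn (fun t : ℝ => t ^ γ * (Real.log t ^ m * Real.exp (-t))) (Set.Ioi 0) := by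
    intro m
    simpa using g_integrable m hγ1
  have hFeq : ∀ t ∈ Set.Ioi (0:ℝ),
      (t / k) ^ γ * (Real.log (t / k)) ^ μ * Real.exp (-t)
        = ∑ m ∈ Finset.range (μ + 1), c m * (t ^ γ * (Real.log t ^ m * Real.exp (-t))) := by
    intro t ht
    rw [Real.log_div (ne_of_gt ht) hk', Real.div_rpow (le_of_lt ht) (le_of_lt hk), sub_pow,
      div_eq_mul_inv, ← Real.rpow_neg (le_of_lt hk), Finset.mul_sum, Finset.sum_mul]
    exact Finset.sum_congr rfl fun m hm => by simp only [hc]; ring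
  have key : ∫ s in Set.Ioi (0 : ℝ), s ^ γ * (Real.log s) ^ μ * Real.exp (-k * s)
      = k⁻¹ * ∑ m ∈ Finset.range (μ + 1), c m * g m (γ + 1) := by
    calc ∫ s in Set.Ioi (0:ℝ), s ^ γ * Real.log s ^ μ * Real.exp (-k * s)
        = ∫ s in Set.Ioi (0:ℝ),
            (fun t => (t / k) ^ γ * (Real.log (t / k)) ^ μ * Real.exp (-t)) (k * s) := by
          refine setIntegral_congr_fun measurableSet_Ioi fun s hs => ?_
          simp only [mul_div_cancel_left₀ _ hk', neg_mul]
      _ = k⁻¹ • ∫ t in Set.Ioi (k * 0), (t / k) ^ γ * (Real.log (t / k)) ^ μ * Real.exp (-t) := by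
          exact MeasureTheory.integral_comp_mul_left_Ioi
            (fun t => (t / k) ^ γ * (Real.log (t / k)) ^ μ * Real.exp (-t)) 0 hk
      _ = k⁻¹ * ∫ t in Set.Ioi (0:ℝ),
            ∑ m ∈ Finset.range (μ + 1), c m * (t ^ γ * (Real.log t ^ m * Real.exp (-t))) := by
          rw [mul_zero, smul_eq_mul]
          congr 1
          exact setIntegral_congr_fun measurableSet_Ioi hFeq
      _ = k⁻¹ * ∑ m ∈ Finset.range (μ + 1), c m * g m (γ + 1) := by
          congr 1
          rw [MeasureTheory.integral_finset_sum _ fun m _ => (hint m).const_mul _]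
          refine Finset.sum_congr rfl fun m hm => ?_
          rw [MeasureTheory.integral_const_mul]
          congr 1
          rw [g]
          norm_num
  rw [key]
  have hsum : ∀ ℓ ∈ Finset.range (μ + 1),
      (μ.choose ℓ : ℝ) * iteratedDeriv (μ - ℓ) Real.Gamma (γ + 1) * (-1) ^ ℓ * Real.log k ^ ℓ
        = (μ.choose ℓ : ℝ) * g (μ - ℓ) (γ + 1) * (-1) ^ ℓ * Real.log k ^ ℓ := by
    intro ℓ _
    rw [gamma_eq _ hγ1]
  rw [Finset.sum_congr rfl hsum, ← Finset.sum_range_reflect, Finset.mul_sum, Finset.mul_sum]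
  refine Finset.sum_congr rfl fun m hm => ?_
  rw [Finset.mem_range] at hm
  have hm' : m ≤ μ := Nat.lt_succ_iff.mp hm
  have h1 : μ + 1 - 1 - m = μ - m := by omega
  have h2 : μ - (μ - m) = m := Nat.sub_sub_self hm'
  have h3 : μ.choose (μ - m) = μ.choose m := Nat.choose_symm hm'
  have hsgn : ((-1:ℝ)) ^ (μ - m + μ) = (-1) ^ m := by
    rw [show μ - m + μ = 2 * (μ - m) + m by omega, pow_add, pow_mul]
    norm_num
  simp only [h1, h2, h3, hc]
  rw [hsgn, Real.rpow_add hk, Real.rpow_one, Real.rpow_neg hk.le]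
  ring
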